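/- Let (Z_n)_{n≥0} be a Galton–Watson branching process with Z_0 = 1 and offspring distribution of mean μ satisfying 0 < μ < 1 (subcritical case). Then Z_n → 0 almost surely, and moreover extinction occurs almost surely: P(∃ n, Z_n = 0) = 1. -/

import Mathlib

open MeasureTheory ProbabilityTheory Filter

/-- **Subcritical extinction.** For a Galton–Watson branching process `Z` with `Z₀ = 1`
and offspring distribution of mean `μ` with `0 < μ < 1`, we have `Zₙ → 0` almost surely,
and extinction occurs almost surely: `P(∃ n, Zₙ = 0) = 1`. -/
theorem galtonWatson_subcritical_extinction
    {Ω : Type*} [MeasurableSpace Ω] (P : Measure Ω) [IsProbabilityMeasure P]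
    (Z : ℕ → Ω → ℕ) (ξ : ℕ → ℕ → Ω → ℕ)
    (hZmeas : ∀ n, Measurable (Z n)) (hξmeas : ∀ n i, Measurable (ξ n i))
    (hZ0 : ∀ ω, Z 0 ω = 1)
    -- branching recursion: `Z_{n+1} = ∑_{i=1}^{Zₙ} ξ_{n,i}`
    (hrec : ∀ n ω, Z (n + 1) ω = ∑ i ∈ Finset.Icc 1 (Z n ω), ξ n i ω)
    (μ : ℝ) (hμ : 0 < μ) (hμ1 : μ < 1)
    -- the offspring variables are identically distributed ...
    (hlaw : ∀ n i, Measure.map (ξ n i) P = Measure.map (ξ 0 1) P)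
    -- ... integrable, with common mean `μ`
    (hint : ∀ n i, Integrable (fun ω => (ξ n i ω : ℝ)) P)
    (hmean : ∀ n i, ∫ ω, (ξ n i ω : ℝ) ∂P = μ)
    -- for each `n`, the variables `(ξ_{n,i})_{i≥1}` together with `𝓕ₙ = σ(Z₀,…,Zₙ)`
    -- form a mutually independent family (i.i.d. and independent of `𝓕ₙ`)
    (hindep : ∀ n, iIndep
      (fun j : Option ℕ => j.elim (⨆ k ≤ n, MeasurableSpace.comap (Z k) inferInstance)
        (fun i => MeasurableSpace.comap (ξ n i) inferInstance)) P) :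
    (∀ᵐ ω ∂P, Tendsto (fun n => (Z n ω : ℝ)) atTop (nhds 0)) ∧
      P {ω | ∃ n, Z n ω = 0} = 1 := by
  set m : ENNReal := ENNReal.ofReal μ with hm
  have hm1 : m < 1 := by simpa [hm] using ENNReal.ofReal_lt_one.2 hμ1
  -- lintegral of the offspring variables
  have hξlint : ∀ n i, ∫⁻ ω, (ξ n i ω : ENNReal) ∂P = m := by
    intro n i
    have h0 : (0 : Ω → ℝ) ≤ᵐ[P] fun ω => (ξ n i ω : ℝ) :=
      Filter.Eventually.of_forall fun ω => by positivity
    have h := MeasureTheory.ofReal_integral_eq_lintegral_ofReal (hint n i) h0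
    rw [hmean n i] at h
    rw [show (∫⁻ ω, (ξ n i ω : ENNReal) ∂P) = ∫⁻ ω, ENNReal.ofReal ((ξ n i ω : ℝ)) ∂P from
      lintegral_congr fun ω => (ENNReal.ofReal_natCast _).symm, ← h]
  -- the sets `A n i = {i-th individual exists in generation n}`
  set A : ℕ → ℕ → Set Ω := fun n i => {ω | 1 ≤ i ∧ i ≤ Z n ω} with hA
  set Mf : ℕ → MeasurableSpace Ω :=
    fun n => ⨆ k ≤ n, MeasurableSpace.comap (Z k) inferInstance with hMf
  have hMfle : ∀ n, Mf n ≤ ‹MeasurableSpace Ω› := by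
    intro n
    exact iSup_le fun k => iSup_le fun _ => (hZmeas k).comap_le
  have hAMf : ∀ n i, MeasurableSet[Mf n] (A n i) := by
    intro n i
    by_cases hi : 1 ≤ i
    · have he : A n i = Z n ⁻¹' Set.Ici i := by
        ext ω; simp [hA, Set.mem_setOf_eq, hi]
      rw [he]
      have hcle : MeasurableSpace.comap (Z n) inferInstance ≤ Mf n :=
        le_iSup₂ (f := fun k (_ : k ≤ n) => MeasurableSpace.comap (Z k) inferInstance) n le_rfl
      exact hcle _ ⟨Set.Ici i, measurableSet_Ici, rfl⟩
    · have he : A n i = ∅ := by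
        ext ω; simp [hA, Set.mem_setOf_eq, hi]
      rw [he]; exact @MeasurableSet.empty _ (Mf n)
  have hAmeas : ∀ n i, MeasurableSet (A n i) := fun n i => hMfle n _ (hAMf n i)
  -- pointwise decomposition of sums over `Icc 1 (Z n ω)` as a `tsum` of indicators
  have hpoint : ∀ (n : ℕ) (g : ℕ → Ω → ENNReal) (ω : Ω),
      (∑ i ∈ Finset.Icc 1 (Z n ω), g i ω)
        = ∑' i : ℕ, Set.indicator (A n i) (g i) ω := by
    intro n g ω
    have hz : ∀ i ∉ Finset.Icc 1 (Z n ω), Set.indicator (A n i) (g i) ω = 0 := by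
      intro i hi
      simp only [Finset.mem_Icc, not_and_or, not_le] at hi
      apply Set.indicator_of_notMem
      simp only [hA, Set.mem_setOf_eq, not_and_or, not_le]
      exact hi.imp id id
    rw [tsum_eq_sum hz]
    refine Finset.sum_congr rfl fun i hi => ?_
    rw [Set.indicator_of_mem]
    simp only [Finset.mem_Icc] at hi
    exact ⟨hi.1, hi.2⟩
  have hIone : ∀ n i, ∫⁻ ω, Set.indicator (A n i) (fun _ => (1 : ENNReal)) ω ∂P
      = P (A n i) := by
    intro n i
    rw [lintegral_indicator (hAmeas n i)]
    simp
  -- key independence computation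
  have key : ∀ n i, ∫⁻ ω, Set.indicator (A n i) (fun ω' => (ξ n i ω' : ENNReal)) ω ∂P
      = P (A n i) * m := by
    intro n i
    have hiprod : ∀ ω, Set.indicator (A n i) (fun ω' => (ξ n i ω' : ENNReal)) ω
        = Set.indicator (A n i) (fun _ => (1 : ENNReal)) ω * (ξ n i ω : ENNReal) := by
      intro ω
      by_cases hω : ω ∈ A n i
      · simp [Set.indicator_of_mem hω]
      · simp [Set.indicator_of_notMem hω]
    have hind : Indep (Mf n) (MeasurableSpace.comap (ξ n i) inferInstance) P := by
      have := (hindep n).indep (i := (none : Option ℕ)) (j := some i) (by simp)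
      simpa using this
    have hgmeas : Measurable[MeasurableSpace.comap (ξ n i) inferInstance]
        (fun ω => (ξ n i ω : ENNReal)) :=
      measurable_from_top.comp (Measurable.of_comap_le le_rfl)
    have hfmeas : Measurable[Mf n] (Set.indicator (A n i) (fun _ => (1 : ENNReal))) :=
      (@measurable_const _ _ _ (Mf n) _).indicator (hAMf n i)
    calc ∫⁻ ω, Set.indicator (A n i) (fun ω' => (ξ n i ω' : ENNReal)) ω ∂P
        = ∫⁻ ω, Set.indicator (A n i) (fun _ => (1 : ENNReal)) ω * (ξ n i ω : ENNReal) ∂P := by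
          simp_rw [hiprod]
      _ = (∫⁻ ω, Set.indicator (A n i) (fun _ => (1 : ENNReal)) ω ∂P)
            * ∫⁻ ω, (ξ n i ω : ENNReal) ∂P :=
          lintegral_mul_eq_lintegral_mul_lintegral_of_independent_measurableSpace
            (hMfle n) (hξmeas n i).comap_le hind hfmeas hgmeas
      _ = P (A n i) * m := by
          rw [hξlint n i, hIone n i]
  -- expectation of Z n
  have hZsum : ∀ n, ∑' i : ℕ, P (A n i) = ∫⁻ ω, (Z n ω : ENNReal) ∂P := by
    intro n
    have h1 : ∀ ω : Ω, ((Z n ω : ENNReal))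
        = ∑' i : ℕ, Set.indicator (A n i) (fun _ => (1 : ENNReal)) ω := by
      intro ω
      rw [← hpoint n (fun _ _ => (1 : ENNReal)) ω]
      simp [Finset.sum_const, Nat.card_Icc]
    simp_rw [h1]
    rw [lintegral_tsum fun i =>
      ((measurable_const (a := (1 : ENNReal))).indicator (hAmeas n i)).aemeasurable]
    exact tsum_congr fun i => (hIone n i).symm
  have hlint : ∀ n, ∫⁻ ω, (Z n ω : ENNReal) ∂P = m ^ n := by
    intro n
    induction n with
    | zero => simp [hZ0]
    | succ n ih =>
      have hcast : ∀ ω, ((Z (n + 1) ω : ENNReal))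
          = ∑' i : ℕ, Set.indicator (A n i) (fun ω' => (ξ n i ω' : ENNReal)) ω := by
        intro ω
        rw [hrec n ω, Nat.cast_sum]
        exact hpoint n (fun i ω' => (ξ n i ω' : ENNReal)) ω
      calc ∫⁻ ω, (Z (n + 1) ω : ENNReal) ∂P
          = ∑' i : ℕ, ∫⁻ ω, Set.indicator (A n i) (fun ω' => (ξ n i ω' : ENNReal)) ω ∂P := by
            simp_rw [hcast]
            exact lintegral_tsum fun i =>
              ((measurable_from_top.comp (hξmeas n i)).indicator (hAmeas n i)).aemeasurable
        _ = ∑' i : ℕ, P (A n i) * m := tsum_congr fun i => key n i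
        _ = (∑' i : ℕ, P (A n i)) * m := ENNReal.tsum_mul_right
        _ = m ^ n * m := by rw [hZsum n, ih]
        _ = m ^ (n + 1) := (pow_succ m n).symm
  -- Markov inequality
  have htail : ∀ n, P {ω | Z n ω ≠ 0} ≤ m ^ n := by
    intro n
    have hset : {ω | Z n ω ≠ 0} = {ω | 1 ≤ ((Z n ω : ENNReal))} := by
      ext ω
      simp [Nat.one_le_iff_ne_zero, Nat.one_le_cast]
    calc P {ω | Z n ω ≠ 0} = 1 * P {ω | 1 ≤ ((Z n ω : ENNReal))} := by rw [hset, one_mul]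
      _ ≤ ∫⁻ ω, (Z n ω : ENNReal) ∂P :=
          mul_meas_ge_le_lintegral (measurable_from_top.comp (hZmeas n)) 1
      _ = m ^ n := hlint n
  -- Borel–Cantelli
  have hsum : (∑' n : ℕ, P {ω | Z n ω ≠ 0}) ≠ ⊤ := by
    have hle : (∑' n : ℕ, P {ω | Z n ω ≠ 0}) ≤ ∑' n : ℕ, m ^ n :=
      ENNReal.tsum_le_tsum htail
    have hgeom : (∑' n : ℕ, m ^ n) = (1 - m)⁻¹ := ENNReal.tsum_geometric m
    have hne : (1 - m)⁻¹ ≠ ⊤ := by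
      rw [Ne, ENNReal.inv_eq_top, tsub_eq_zero_iff_le]
      exact not_le.2 hm1
    exact ne_top_of_le_ne_top (hgeom ▸ hne) hle
  have hae : ∀ᵐ ω ∂P, ∀ᶠ n in atTop, ω ∉ {ω' | Z n ω' ≠ 0} :=
    ae_eventually_notMem hsum
  constructor
  · refine hae.mono fun ω hω => ?_
    have heq : (fun n => (Z n ω : ℝ)) =ᶠ[atTop] fun _ => (0 : ℝ) :=
      hω.mono fun n hn => by
        simp only [Set.mem_setOf_eq, not_not] at hn
        simp [hn]
    exact Tendsto.congr' heq.symm tendsto_const_nhds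
  · have hS : MeasurableSet {ω | ∃ n, Z n ω = 0} := by
      rw [Set.setOf_exists]
      exact MeasurableSet.iUnion fun n => (hZmeas n) (measurableSet_singleton 0)
    rw [← prob_compl_eq_zero_iff hS]
    have hmem : ∀ᵐ ω ∂P, ω ∈ {ω' | ∃ n, Z n ω' = 0} := by
      refine hae.mono fun ω hω => ?_
      obtain ⟨n, hn⟩ := hω.exists
      simp only [Set.mem_setOf_eq, not_not] at hn
      exact ⟨n, hn⟩
    have := ae_iff.mp hmem
    simpa [Set.compl_setOf] using this
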